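/- Let X be a Stone space and let 𝒰 be a basis of clopen sets for the topology of X with the property that any two members of 𝒰 are either nested (one contained in the other) or disjoint. Then every clopen subset C ⊆ X can be written as a finite disjoint union of members of 𝒰. -/
import Mathlib


/-- Let `X` be a Stone space and `𝒰` a basis of clopen sets for its topology
such that any two members of `𝒰` are either nested or disjoint. Then every clopen subset
`C ⊆ X` is a finite *disjoint* union of members of `𝒰`. -/
theorem clopen_eq_finite_disjoint_union_of_nested_basis {X : Type*} [TopologicalSpace X]
    [CompactSpace X] [T2Space X] [TotallyDisconnectedSpace X] (𝒰 : Set (Set X))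
    (h𝒰 : TopologicalSpace.IsTopologicalBasis 𝒰) (hclopen : ∀ U ∈ 𝒰, IsClopen U)
    (hnested : ∀ U₁ ∈ 𝒰, ∀ U₂ ∈ 𝒰, U₁ ⊆ U₂ ∨ U₂ ⊆ U₁ ∨ U₁ ∩ U₂ = ∅)
    (C : Set X) (hC : IsClopen C) :
    ∃ F : Finset (Set X), ↑F ⊆ 𝒰 ∧ (F : Set (Set X)).PairwiseDisjoint id ∧ C = ⋃₀ ↑F := by
  classical
  -- Step 1: a finite cover of C by basis elements contained in C
  set ι := {U : Set X // U ∈ 𝒰 ∧ U ⊆ C} with hι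
  have hcov : C ⊆ ⋃ i : ι, (i : Set X) := by
    intro x hx
    obtain ⟨U, hU, hxU, hUC⟩ := h𝒰.exists_subset_of_mem_open hx hC.2
    exact Set.mem_iUnion.2 ⟨⟨U, hU, hUC⟩, hxU⟩
  obtain ⟨t, ht⟩ := hC.1.isCompact.elim_finite_subcover (fun i : ι => (i : Set X))
    (fun i => (hclopen i i.2.1).2) hcov
  set F0 : Finset (Set X) := t.image Subtype.val with hF0
  have hF0𝒰 : ∀ U ∈ F0, U ∈ 𝒰 ∧ U ⊆ C := by
    intro U hU
    simp only [hF0, Finset.mem_image] at hU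
    obtain ⟨i, _, rfl⟩ := hU
    exact i.2
  have hCF0 : C = ⋃₀ ↑F0 := by
    apply Set.Subset.antisymm
    · intro x hx
      obtain ⟨V, hV⟩ := Set.mem_iUnion₂.1 (ht hx)
      exact ⟨V.1, Finset.mem_coe.2 (Finset.mem_image.2 ⟨V, hV.1, rfl⟩), hV.2⟩
    · intro x hx
      obtain ⟨U, hU, hxU⟩ := hx
      exact (hF0𝒰 U hU).2 hxU
  -- Step 2: keep only the maximal elements of F0
  set F : Finset (Set X) := F0.filter (fun U => ∀ V ∈ F0, U ⊆ V → U = V) with hF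
  have hFsub : F ⊆ F0 := Finset.filter_subset _ _
  refine ⟨F, ?_, ?_, ?_⟩
  · intro U hU
    exact (hF0𝒰 U (hFsub hU)).1
  · intro U hU V hV hUV
    have hU' := Finset.mem_filter.1 hU
    have hV' := Finset.mem_filter.1 hV
    rcases hnested U (hF0𝒰 U hU'.1).1 V (hF0𝒰 V hV'.1).1 with h | h | h
    · exact absurd (hU'.2 V hV'.1 h) hUV
    · exact absurd (hV'.2 U hU'.1 h).symm hUV
    · exact Set.disjoint_iff_inter_eq_empty.2 h
  · rw [hCF0]
    apply Set.Subset.antisymm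
    · intro x hx
      obtain ⟨U, hU, hxU⟩ := hx
      obtain ⟨V, hUV, hVmax⟩ := F0.exists_le_maximal hU
      refine ⟨V, Finset.mem_filter.2 ⟨hVmax.1, fun W hW hVW => le_antisymm hVW (hVmax.2 hW hVW)⟩,
        hUV hxU⟩
    · exact Set.sUnion_subset_sUnion (by exact_mod_cast hFsub)
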